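/- For any natural number n > 0, the principle of sock division by n is equivalent to the principle that multiplication by n equals repeated addition of n. -/

import Mathlib

/-- Sock division by `n`. -/
def SockDivision (n : ℕ) : Prop :=
  ∀ (A B U V : Type) (X : A → Set U) (Y : B → Set V),
    Pairwise (Function.onFun Disjoint X) → Pairwise (Function.onFun Disjoint Y) →
    (∀ a, Nonempty (X a ≃ Fin n)) → (∀ b, Nonempty (Y b ≃ Fin n)) →
    Nonempty ((⋃ a, X a) ≃ (⋃ b, Y b)) → Nonempty (A ≃ B)

/-- Multiplication by `n` equals repeated addition of `n`. -/
def MulEqRepeatedAdd (n : ℕ) : Prop :=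
  ∀ (A U : Type) (X : A → Set U), Pairwise (Function.onFun Disjoint X) →
    (∀ a, Nonempty (X a ≃ Fin n)) → Nonempty ((⋃ a, X a) ≃ A × Fin n)

lemma card_mul_nat_cancel {a b : Cardinal} {n : ℕ} (hn : 0 < n)
    (h : a * n = b * n) : a = b := by
  have hn0 : (n : Cardinal) ≠ 0 := by exact_mod_cast hn.ne'
  rcases lt_or_ge a Cardinal.aleph0 with ha | ha
  · rcases lt_or_ge b Cardinal.aleph0 with hb | hb
    · obtain ⟨m, rfl⟩ := Cardinal.lt_aleph0.mp ha
      obtain ⟨k, rfl⟩ := Cardinal.lt_aleph0.mp hb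
      rw [← Nat.cast_mul, ← Nat.cast_mul, Nat.cast_inj] at h
      exact_mod_cast Nat.eq_of_mul_eq_mul_right hn h
    · exfalso
      have hb' : b * n = b :=
        Cardinal.mul_eq_left hb ((Cardinal.nat_lt_aleph0 n).le.trans hb) hn0
      have : a * n < Cardinal.aleph0 := Cardinal.mul_lt_aleph0 ha (Cardinal.nat_lt_aleph0 n)
      rw [h, hb'] at this
      exact absurd hb this.not_ge
  · have ha' : a * n = a :=
      Cardinal.mul_eq_left ha ((Cardinal.nat_lt_aleph0 n).le.trans ha) hn0
    rcases lt_or_ge b Cardinal.aleph0 with hb | hb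
    · exfalso
      have : b * n < Cardinal.aleph0 := Cardinal.mul_lt_aleph0 hb (Cardinal.nat_lt_aleph0 n)
      rw [← h, ha'] at this
      exact absurd ha this.not_ge
    · have hb' : b * n = b :=
        Cardinal.mul_eq_left hb ((Cardinal.nat_lt_aleph0 n).le.trans hb) hn0
      rw [ha', hb'] at h
      exact h

theorem sockDivision_iff_mul_eq_repeated_add (n : ℕ) (hn : 0 < n) :
    SockDivision n ↔ MulEqRepeatedAdd n := by
  constructor
  · intro h A U X hX hXn
    set T : Set U := ⋃ a, X a with hT
    let Z : T → Set (T × Fin n) := fun x => {x} ×ˢ (Set.univ : Set (Fin n))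
    let W : A × Fin n → Set (U × Fin n) := fun p => X p.1 ×ˢ ({p.2} : Set (Fin n))
    have hZ : Pairwise (Function.onFun Disjoint Z) := by
      intro x y hxy
      rw [Function.onFun, Set.disjoint_left]
      rintro ⟨u, i⟩ hp hq
      simp only [Z, Set.mem_prod, Set.mem_singleton_iff] at hp hq
      exact hxy (hp.1.symm.trans hq.1)
    have hW : Pairwise (Function.onFun Disjoint W) := by
      rintro ⟨a, i⟩ ⟨b, j⟩ hne
      rw [Function.onFun, Set.disjoint_left]
      rintro ⟨u, k⟩ hp hq
      simp only [W, Set.mem_prod, Set.mem_singleton_iff] at hp hq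
      by_cases hab : a = b
      · subst hab
        exact hne (by rw [hp.2.symm.trans hq.2])
      · exact Set.disjoint_left.mp (hX hab) hp.1 hq.1
    have hZn : ∀ x, Nonempty (Z x ≃ Fin n) := fun x =>
      ⟨(Equiv.Set.prod _ _).trans <|
        ((Equiv.Set.singleton x).prodCongr (Equiv.Set.univ _)).trans (Equiv.punitProd.{0,0} (Fin n))⟩
    have hWn : ∀ p, Nonempty (W p ≃ Fin n) := by
      rintro ⟨a, i⟩
      obtain ⟨e⟩ := hXn a
      exact ⟨(Equiv.Set.prod _ _).trans <|
        (e.prodCongr (Equiv.Set.singleton i)).trans (Equiv.prodPUnit.{0,0} (Fin n))⟩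
    have hUZ : (⋃ x, Z x) = Set.univ := by
      ext ⟨x, i⟩
      simp [Z]
    have hUW : (⋃ p, W p) = T ×ˢ (Set.univ : Set (Fin n)) := by
      ext ⟨u, i⟩
      simp only [W, hT, Set.mem_iUnion, Set.mem_prod, Set.mem_singleton_iff, Set.mem_univ,
        and_true, Prod.exists]
      aesop
    have he : Nonempty ((⋃ x, Z x) ≃ (⋃ p, W p)) := by
      have eMid : ↥(T ×ˢ (Set.univ : Set (Fin n))) ≃ ↥T × Fin n :=
        (Equiv.Set.prod _ _).trans ((Equiv.refl _).prodCongr (Equiv.Set.univ _))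
      exact ⟨(Equiv.setCongr hUZ).trans <| (Equiv.Set.univ _).trans <|
        eMid.symm.trans (Equiv.setCongr hUW).symm⟩
    exact h T (A × Fin n) (T × Fin n) (U × Fin n) Z W hZ hW hZn hWn he
  · intro h A B U V X Y hX hY hXn hYn he
    obtain ⟨e⟩ := he
    obtain ⟨eX⟩ := h A U X hX hXn
    obtain ⟨eY⟩ := h B V Y hY hYn
    have hcard : (Cardinal.mk A) * n = (Cardinal.mk B) * n := by
      have := Cardinal.mk_congr ((eX.symm.trans e).trans eY)
      simpa [Cardinal.mk_fin] using this
    exact Cardinal.eq.mp (card_mul_nat_cancel hn hcard)
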